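/- arXiv:2605.11279 — 6 statements merged into one kernel-verified Lean document; each statement's English description precedes it below -/
import Mathlib

section
/- Let v₊ > 0, α⁺, α⁻ > 0, ρ⁺ ∈ (0,1) satisfy (ρ⁺)² + (α⁺+α⁻−1)ρ⁺ − α⁻ = 0, ρ⁻ = 1 − ρ⁺, γ = v₊ρ⁺. Then the 2×2 matrix J = [[−(v₊−γ+α⁺−ρ⁻)/γ, ρ⁻(ρ⁺+α⁻+γ)/(γρ⁺)], [ρ⁺(α⁺−ρ⁻)/(γρ⁻), −(ρ⁺+α⁻)/γ]] has determinant v₊ρ⁺ρ⁻/γ² > 0 and trace −(v₊−γ+α⁺+α⁻+ρ⁺−ρ⁻)/γ < 0. -/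
theorem stmt4 (v a b ρp : ℝ) (hv : 0 < v) (ha : 0 < a) (hb : 0 < b)
    (hρp : ρp ∈ Set.Ioo (0:ℝ) 1) (hroot : ρp^2 + (a + b - 1) * ρp - b = 0) :
    let ρm : ℝ := 1 - ρp
    let γ : ℝ := v * ρp
    let J : Matrix (Fin 2) (Fin 2) ℝ :=
      !![-((v - γ + a - ρm)/γ), ρm*(ρp + b + γ)/(γ*ρp);
         ρp*(a - ρm)/(γ*ρm), -((ρp + b)/γ)]
    J.det = v * ρp * ρm / γ^2 ∧ 0 < J.det ∧
    Matrix.trace J = -((v - γ + a + b + ρp - ρm)/γ) ∧ Matrix.trace J < 0 := by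
  obtain ⟨h0, h1⟩ := hρp
  intro ρm γ J
  have hρm : 0 < ρm := by simp only [ρm]; linarith
  have hγ : 0 < γ := mul_pos hv h0
  have hγn : γ ≠ 0 := ne_of_gt hγ
  have hdet : J.det = v * ρp * ρm / γ^2 := by
    simp only [J, Matrix.det_fin_two_of]
    field_simp
    linear_combination (-v) * hroot
  have htr : Matrix.trace J = -((v - γ + a + b + ρp - ρm)/γ) := by
    simp only [J, Matrix.trace_fin_two_of]
    field_simp
    ring
  refine ⟨hdet, ?_, htr, ?_⟩
  · rw [hdet]
    positivity
  · rw [htr]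
    have hkey : a + b + ρp - ρm = b / ρp + ρp := by
      simp only [ρm]
      field_simp
      linear_combination hroot
    have : 0 < v - γ + a + b + ρp - ρm := by
      have hvγ : v - γ = v * ρm := by simp only [γ, ρm]; ring
      have hb' : 0 < b / ρp := div_pos hb h0
      nlinarith [mul_pos hv hρm]
    have := div_pos this hγ
    linarith
end

section
/- Under the hypotheses of the preceding statement (v₊ > 0, α⁺, α⁻ > 0, ρ⁺ ∈ (0,1) the root of (ρ⁺)² + (α⁺+α⁻−1)ρ⁺ − α⁻ = 0, ρ⁻ = 1−ρ⁺, γ = v₊ρ⁺), the matrix J(0,0) has two distinct negative real eigenvalues; i.e. tr(J)² − 4 det(J) > 0, tr(J) < 0 and det(J) > 0. -/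
theorem stmt5 (v a b ρp : ℝ) (hv : 0 < v) (ha : 0 < a) (hb : 0 < b)
    (hρp : ρp ∈ Set.Ioo (0:ℝ) 1) (hroot : ρp^2 + (a + b - 1) * ρp - b = 0) :
    let ρm : ℝ := 1 - ρp
    let γ : ℝ := v * ρp
    let J : Matrix (Fin 2) (Fin 2) ℝ :=
      !![-((v - γ + a - ρm)/γ), ρm*(ρp + b + γ)/(γ*ρp);
         ρp*(a - ρm)/(γ*ρm), -((ρp + b)/γ)]
    (Matrix.trace J)^2 - 4 * J.det > 0 ∧ Matrix.trace J < 0 ∧ J.det > 0 := by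
  intro ρm γ J
  obtain ⟨hρ0, hρ1⟩ := hρp
  have hρm : (0:ℝ) < ρm := by simp only [ρm]; linarith
  have hρm' : (1:ℝ) - ρp ≠ 0 := by linarith
  have hγ : (0:ℝ) < γ := mul_pos hv hρ0
  have htr : Matrix.trace J = -((v * ρm + ρp + b / ρp) / γ) := by
    rw [Matrix.trace_fin_two_of]
    simp only [γ, ρm]
    field_simp
    linear_combination (-1) * hroot
  have hdet : J.det = ρm / (v * ρp) := by
    rw [Matrix.det_fin_two_of]
    simp only [γ, ρm]
    field_simp
    linear_combination (-v) * hroot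
  have hdetpos : J.det > 0 := by
    rw [hdet]; positivity
  have htrneg : Matrix.trace J < 0 := by
    rw [htr]
    have : 0 < (v * ρm + ρp + b / ρp) / γ := by positivity
    linarith
  refine ⟨?_, htrneg, hdetpos⟩
  rw [htr, hdet]
  have h1 : (-((v * ρm + ρp + b / ρp) / γ))^2 - 4 * (ρm / (v * ρp))
      = ((v * ρm - ρp)^2 + 2 * (v * ρm + ρp) * (b / ρp) + (b / ρp)^2) / γ^2 := by
    simp only [γ]
    field_simp
    ring
  rw [h1]
  have hbρ : 0 < b / ρp := by positivity
  have h2 : 0 < 2 * (v * ρm + ρp) * (b / ρp) := by positivity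
  have h3 : 0 < (v * ρm - ρp)^2 + 2 * (v * ρm + ρp) * (b / ρp) + (b / ρp)^2 := by
    nlinarith [sq_nonneg (v * ρm - ρp), sq_nonneg (b / ρp)]
  positivity
end

section
/- With v₊, α⁺, α⁻, ρ⁺, ρ⁻, γ as above, define γ²(tr²(J(0,0)) − 4 det(J(0,0))). Then this quantity equals (v₊ − γ + α⁺ − α⁻ − ρ⁺ − ρ⁻)² + 4(α⁺ − ρ⁻)(ρ⁺ + α⁻ + γ), and this is strictly positive. -/
theorem stmt6 (v a b ρp : ℝ) (hv : 0 < v) (ha : 0 < a) (hb : 0 < b)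
    (hρp : ρp ∈ Set.Ioo (0:ℝ) 1) (hroot : ρp^2 + (a + b - 1) * ρp - b = 0) :
    let ρm : ℝ := 1 - ρp
    let γ : ℝ := v * ρp
    let J : Matrix (Fin 2) (Fin 2) ℝ :=
      !![-((v - γ + a - ρm)/γ), ρm*(ρp + b + γ)/(γ*ρp);
         ρp*(a - ρm)/(γ*ρm), -((ρp + b)/γ)]
    γ^2 * ((Matrix.trace J)^2 - 4 * J.det) =
      (v - γ + a - b - ρp - ρm)^2 + 4*(a - ρm)*(ρp + b + γ) ∧
    0 < (v - γ + a - b - ρp - ρm)^2 + 4*(a - ρm)*(ρp + b + γ) := by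
  obtain ⟨h0, h1⟩ := hρp
  intro ρm γ J
  have hρm : 0 < ρm := by simp only [ρm]; linarith
  have hγ : 0 < γ := mul_pos hv h0
  have ham : 0 < a - ρm := by
    have : (a - ρm) * ρp = b * ρm := by simp only [ρm]; nlinarith [hroot]
    nlinarith [mul_pos hb hρm]
  constructor
  · have htr : Matrix.trace J = -((v - γ + a - ρm)/γ) + -((ρp + b)/γ) := by
      simp [J, Matrix.trace_fin_two]
    have hdet : J.det = -((v - γ + a - ρm)/γ) * -((ρp + b)/γ)
        - ρm*(ρp + b + γ)/(γ*ρp) * (ρp*(a - ρm)/(γ*ρm)) := by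
      simp [J, Matrix.det_fin_two]
    rw [htr, hdet]
    field_simp
    ring
  · have h2 : 0 < ρp + b + γ := by positivity
    nlinarith [sq_nonneg (v - γ + a - b - ρp - ρm), mul_pos ham h2]
end

section
/- Let v₊ > 0, α⁺, α⁻ > 0, ρ⁺ ∈ (0,1) the root of (ρ⁺)² + (α⁺+α⁻−1)ρ⁺ − α⁻ = 0, ρ⁻ = 1−ρ⁺, γ = v₊ρ⁺. Then the matrix J(1,1) = [[−(v₊−γ+α⁺)/γ, ρ⁻(α⁻+γ)/(γρ⁺)], [ρ⁺α⁺/(γρ⁻), −α⁻/γ]] has negative determinant: det J(1,1) = (v₊/γ²)(α⁻ − ρ⁺(α⁺+α⁻)) < 0. Consequently J(1,1) has one positive and one negative real eigenvalue. -/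
lemma eig_vec (p q r s lam : ℝ) (hq : q ≠ 0)
    (h : lam^2 - (p+s)*lam + (p*s - q*r) = 0) :
    ∃ w : Fin 2 → ℝ, w ≠ 0 ∧ (!![p,q;r,s]).mulVec w = lam • w := by
  refine ⟨![q, lam - p], ?_, ?_⟩
  · intro hw
    have := congrFun hw 0
    simp at this
    exact hq this
  · funext i
    fin_cases i <;>
      simp [Matrix.mulVec, dotProduct, Fin.sum_univ_two] <;> nlinarith [h]

theorem stmt7 (v a b ρp : ℝ) (hv : 0 < v) (ha : 0 < a) (hb : 0 < b)
    (hρp : ρp ∈ Set.Ioo (0:ℝ) 1) (hroot : ρp^2 + (a + b - 1) * ρp - b = 0) :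
    let ρm : ℝ := 1 - ρp
    let γ : ℝ := v * ρp
    let J : Matrix (Fin 2) (Fin 2) ℝ :=
      !![-((v - γ + a)/γ), ρm*(b + γ)/(γ*ρp);
         ρp*a/(γ*ρm), -(b/γ)]
    J.det = (v/γ^2) * (b - ρp*(a + b)) ∧ J.det < 0 ∧
    ∃ (ls lu : ℝ), ls < 0 ∧ 0 < lu ∧
      (∃ w : Fin 2 → ℝ, w ≠ 0 ∧ J.mulVec w = ls • w) ∧
      (∃ w : Fin 2 → ℝ, w ≠ 0 ∧ J.mulVec w = lu • w) := by
  obtain ⟨h0, h1⟩ := hρp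
  intro ρm γ J
  have hρm : 0 < ρm := by simp only [ρm]; linarith
  have hγ : 0 < γ := mul_pos hv h0
  have hγ' : γ ≠ 0 := ne_of_gt hγ
  have hρp' : ρp ≠ 0 := ne_of_gt h0
  have hρm' : ρm ≠ 0 := ne_of_gt hρm
  -- determinant formula
  have hdet : J.det = (v/γ^2) * (b - ρp*(a + b)) := by
    simp only [J, Matrix.det_fin_two_of, γ]
    field_simp
    ring
  have hkey : b - ρp*(a + b) = ρp^2 - ρp := by nlinarith [hroot]
  have hdetneg : J.det < 0 := by
    rw [hdet, hkey]
    apply mul_neg_of_pos_of_neg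
    · positivity
    · nlinarith
  refine ⟨hdet, hdetneg, ?_⟩
  -- eigenvalues
  set p : ℝ := -((v - γ + a)/γ) with hp
  set q : ℝ := ρm*(b + γ)/(γ*ρp) with hq
  set r : ℝ := ρp*a/(γ*ρm) with hr
  set s : ℝ := -(b/γ) with hs
  have hqpos : 0 < q := by
    rw [hq]; positivity
  have hd : J.det = p*s - q*r := by
    simp only [J, Matrix.det_fin_two_of, hp, hq, hr, hs]
  have hdneg : p*s - q*r < 0 := hd ▸ hdetneg
  have hDpos : 0 < (p+s)^2 - 4*(p*s - q*r) := by nlinarith [sq_nonneg (p+s)]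
  have h2 : Real.sqrt ((p+s)^2 - 4*(p*s - q*r)) * Real.sqrt ((p+s)^2 - 4*(p*s - q*r))
      = (p+s)^2 - 4*(p*s - q*r) := Real.mul_self_sqrt hDpos.le
  have hRpos : 0 < Real.sqrt ((p+s)^2 - 4*(p*s - q*r)) := Real.sqrt_pos.mpr hDpos
  set R := Real.sqrt ((p+s)^2 - 4*(p*s - q*r)) with hR
  have hprod : ((p+s) - R)/2 * (((p+s) + R)/2) = p*s - q*r := by
    linear_combination -h2/4
  have hJ : J = !![p,q;r,s] := by
    simp only [J, hp, hq, hr, hs]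
  clear_value p q r s R
  have hlsneg : ((p+s) - R)/2 < 0 := by
    by_contra h; push_neg at h
    nlinarith [hprod, mul_nonneg (by linarith : (0:ℝ) ≤ p+s-R) (by linarith : (0:ℝ) ≤ p+s+R)]
  have hlupos : 0 < ((p+s) + R)/2 := by
    by_contra h; push_neg at h
    nlinarith [hprod, mul_nonneg (by linarith : (0:ℝ) ≤ -(p+s-R)) (by linarith : (0:ℝ) ≤ -(p+s+R))]
  refine ⟨((p+s) - R)/2, ((p+s) + R)/2, hlsneg, hlupos, ?_, ?_⟩
  · rw [hJ]
    exact eig_vec p q r s _ (ne_of_gt hqpos) (by linear_combination h2/4)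
  · rw [hJ]
    exact eig_vec p q r s _ (ne_of_gt hqpos) (by linear_combination h2/4)
end

section
/- Let v₊ > 0, α⁺, α⁻ > 0, ρ⁺ ∈ (0,1) the root of (ρ⁺)² + (α⁺+α⁻−1)ρ⁺ − α⁻ = 0, ρ⁻ = 1−ρ⁺, γ = v₊ρ⁺. Let λ_u be the positive eigenvalue of J(1,1) = [[−(v₊−γ+α⁺)/γ, ρ⁻(α⁻+γ)/(γρ⁺)], [ρ⁺α⁺/(γρ⁻), −α⁻/γ]], and let (x_u, y_u) be an eigenvector for λ_u with x_u > 0. Then (v₊−γ+α⁺)/(v₊−γ+α⁺−ρ⁻) < y_u/x_u < α⁺/(α⁺−ρ⁻). -/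
theorem stmt9 (v a b ρp : ℝ) (hv : 0 < v) (ha : 0 < a) (hb : 0 < b)
    (hρp : ρp ∈ Set.Ioo (0:ℝ) 1) (hroot : ρp^2 + (a + b - 1) * ρp - b = 0) :
    let ρm : ℝ := 1 - ρp
    let γ : ℝ := v * ρp
    let J : Matrix (Fin 2) (Fin 2) ℝ :=
      !![-((v - γ + a)/γ), ρm*(b + γ)/(γ*ρp);
         ρp*a/(γ*ρm), -(b/γ)]
    ∀ (lu xu yu : ℝ), 0 < lu → 0 < xu → J.mulVec ![xu, yu] = lu • ![xu, yu] →
      (v - γ + a) / (v - γ + a - ρm) < yu / xu ∧ yu / xu < a / (a - ρm) := by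
  intro ρm γ J lu xu yu hlu hxu heq
  obtain ⟨hρ0, hρ1⟩ := hρp
  have hρm : 0 < ρm := by simp [ρm]; linarith
  have hγ : 0 < γ := mul_pos hv hρ0
  have hkey : a * ρp - b * ρm = ρp * ρm := by simp only [ρm]; nlinarith [hroot]
  have h0 := congrFun heq 0
  have h1 := congrFun heq 1
  simp [J, Matrix.mulVec, dotProduct, Fin.sum_univ_two] at h0 h1
  -- clear denominators
  have e0 : -((v - γ + a) * ρp * xu) + ρm * (b + γ) * yu = lu * xu * (γ * ρp) := by
    have h := h0; field_simp at h
    exact mul_right_cancel₀ hγ.ne' (by linear_combination γ * h)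
  have e1 : ρp * a * xu - b * ρm * yu = lu * yu * (γ * ρm) := by
    have h := h1; field_simp at h
    exact mul_right_cancel₀ hγ.ne' (by linear_combination γ * h)
  simp only [ρm, γ] at e0 e1 hkey ⊢
  have hρm' : (0:ℝ) < 1 - ρp := by linarith
  have hyu : 0 < yu := by
    nlinarith [e1, mul_pos (mul_pos hρ0 ha) hxu, mul_pos hb hρm',
      mul_pos (mul_pos hlu (mul_pos hv hρ0)) hρm']
  have haρm : 0 < a - (1 - ρp) := by
    have : ρp * (a - (1 - ρp)) = (1 - ρp) * b := by linear_combination hkey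
    nlinarith [mul_pos hρm hb]
  have hA : 0 < v - v * ρp + a - (1 - ρp) := by nlinarith [mul_pos hv hρm]
  constructor
  · rw [div_lt_div_iff₀ hA hxu]
    have h2 : ρp * ((yu * (v - v * ρp + a - (1 - ρp))) - ((v - v * ρp + a) * xu))
        = lu * xu * (v * ρp * ρp) := by linear_combination e0 + yu * hkey
    nlinarith [mul_pos (mul_pos hlu hxu) (mul_pos (mul_pos hv hρ0) hρ0)]
  · rw [div_lt_div_iff₀ hxu haρm]
    have h2 : ρp * ((a * xu) - (yu * (a - (1 - ρp))))
        = lu * yu * (v * ρp * (1 - ρp)) := by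
      linear_combination e1 - yu * hkey
    nlinarith [h2, mul_pos (mul_pos hlu hyu) (mul_pos (mul_pos hv hρ0) hρm')]
end

section
/- Let v₊ > 0, α⁺, α⁻ > 0, ρ⁺ ∈ (0,1) with (ρ⁺)² + (α⁺+α⁻−1)ρ⁺ − α⁻ = 0, ρ⁻ = 1−ρ⁺, γ = v₊ρ⁺. Consider the planar vector field F(x,y) = (−(ρ⁻/γ)xy − ((v₊−γ+α⁺−ρ⁻)/γ)x + (ρ⁻(ρ⁺+α⁻+γ)/(γρ⁺))y, (ρ⁺/γ)xy − ((ρ⁺+α⁻)/γ)y + (ρ⁺(α⁺−ρ⁻)/(γρ⁻))x). Then the only zeros of F in [0,1]² are (0,0) and (1,1). -/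
theorem stmt10 (v a b ρp : ℝ) (hv : 0 < v) (ha : 0 < a) (hb : 0 < b)
    (hρp : ρp ∈ Set.Ioo (0:ℝ) 1) (hroot : ρp^2 + (a + b - 1) * ρp - b = 0) :
    let ρm : ℝ := 1 - ρp
    let γ : ℝ := v * ρp
    ∀ x y : ℝ, x ∈ Set.Icc (0:ℝ) 1 → y ∈ Set.Icc (0:ℝ) 1 →
      ((-(ρm/γ) * x * y - ((v - γ + a - ρm)/γ) * x + (ρm*(ρp + b + γ)/(γ*ρp)) * y = 0 ∧
        (ρp/γ) * x * y - ((ρp + b)/γ) * y + (ρp*(a - ρm)/(γ*ρm)) * x = 0)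
        ↔ ((x, y) = ((0:ℝ), (0:ℝ)) ∨ (x, y) = ((1:ℝ), (1:ℝ)))) := by
  intro ρm γ x y hx hy
  have hρp0 : ρp ≠ 0 := ne_of_gt hρp.1
  have hρm0 : ρm ≠ 0 := by simp only [ρm]; linarith [hρp.2]
  have hγ0 : γ ≠ 0 := by simp only [γ]; positivity
  have hm : (0:ℝ) < 1 - ρp := by linarith [hρp.2]
  constructor
  · rintro ⟨h1, h2⟩
    simp only [ρm, γ] at h1 h2
    field_simp at h1 h2
    have key : (v^2*ρp^3*(1-ρp)^2) * (x*(x-1)) = 0 := by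
      linear_combination ((v*ρp)*((1-ρp)*(ρp+b-ρp*x)))*h1 - ((v*ρp)*(ρp*((1-ρp)*x-a-v*(1-ρp))))*h2 +
        ((1-ρp)*(ρp+b-ρp*x)*v*ρp*y + ρp*((1-ρp)*x-a-v*(1-ρp))*v*ρp*x - v*ρp*ρp*(1-ρp)*x*(x-1))*hroot
    have hpos : (v^2*ρp^3*(1-ρp)^2) ≠ 0 := by positivity
    have hxx : x = 0 ∨ x = 1 := by
      rcases mul_eq_zero.mp key with h | h
      · exact absurd h hpos
      · rcases mul_eq_zero.mp h with h | h
        · exact Or.inl h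
        · exact Or.inr (by linarith)
    rcases hxx with rfl | rfl
    · left
      have hy0 : y * ((ρp+b)*(v*ρp*(1-ρp))) = 0 := by linear_combination -(v*ρp)*h2
      have : y = 0 := by
        rcases mul_eq_zero.mp hy0 with h | h
        · exact h
        · have : (0:ℝ) < (ρp+b)*(v*ρp*(1-ρp)) :=
            mul_pos (add_pos hρp.1 hb) (mul_pos (mul_pos hv hρp.1) hm)
          exact absurd h (ne_of_gt this)
      simp [this]
    · right
      have hy1 : (1 - y) * (v*ρp*(1-ρp)*b) = 0 := by
        linear_combination (v*ρp)*h2 - (v*ρp)*hroot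
      have : y = 1 := by
        rcases mul_eq_zero.mp hy1 with h | h
        · linarith
        · have : (0:ℝ) < v*ρp*(1-ρp)*b :=
            mul_pos (mul_pos (mul_pos hv hρp.1) hm) hb
          exact absurd h (ne_of_gt this)
      simp [this]
  · rintro (h | h) <;> rw [Prod.mk.injEq] at h <;> obtain ⟨rfl, rfl⟩ := h
    · norm_num
    · constructor
      · field_simp [ρm, γ]
        linear_combination (-1)*hroot
      · field_simp [ρm, γ]
        linear_combination hroot
end
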